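/- Let $q$ be an odd prime power with $q \equiv 1 \pmod 4$, and suppose $l$ is an integer coprime to $q$ with $l \equiv r \pmod q$, $0 \leq r \leq q-1$. If $p \nmid 2ab$ and $l^2 \equiv ab \pmod q$, then $2\sqrt{q}\,|\cos(4\pi r/q)| \geq 4\sqrt{q}\,\|\tfrac{1}{2} - \tfrac{4r}{q}\|$, and moreover $\|\tfrac{q-8r}{2q}\| \neq 0$, so that $|\cos(4\pi r/q)| \geq 1/q$. -/

import Mathlib

/-- Distance from a real number to the nearest integer. -/
noncomputable def distNearestInt (x : ℝ) : ℝ := |x - round x|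

open Real in
lemma two_distNearestInt_le_abs_sin (y : ℝ) :
    2 * distNearestInt y ≤ |Real.sin (Real.pi * y)| := by
  set z := y - (round y : ℝ) with hz
  have hz2 : |z| ≤ 1 / 2 := abs_sub_round y
  have h1 : Real.sin (Real.pi * y) = (-1) ^ (round y) * Real.sin (Real.pi * z) := by
    rw [show Real.pi * y = Real.pi * z + (round y : ℤ) * Real.pi by rw [hz]; push_cast; ring,
      Real.sin_add_int_mul_pi]
  have habs : |Real.sin (Real.pi * y)| = |Real.sin (Real.pi * z)| := by
    have h2 : |((-1 : ℝ)) ^ round y| = 1 := by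
      rcases Int.even_or_odd (round y) with h | h
      · rw [h.neg_one_zpow, abs_one]
      · rw [h.neg_one_zpow, abs_neg, abs_one]
    rw [h1, abs_mul, h2, one_mul]
  have hsz : |Real.sin (Real.pi * z)| = Real.sin (Real.pi * |z|) := by
    rcases le_or_gt 0 z with h | h
    · rw [abs_of_nonneg h, abs_of_nonneg]
      exact Real.sin_nonneg_of_nonneg_of_le_pi (by positivity)
        (by nlinarith [Real.pi_pos, abs_of_nonneg h ▸ hz2])
    · rw [abs_of_neg h, show Real.pi * -z = -(Real.pi * z) by ring, Real.sin_neg,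
        abs_of_nonpos]
      have : 0 ≤ Real.sin (-(Real.pi * z)) := by
        apply Real.sin_nonneg_of_nonneg_of_le_pi (by nlinarith [Real.pi_pos])
        nlinarith [Real.pi_pos, abs_of_neg h ▸ hz2]
      rw [Real.sin_neg] at this; linarith
  have hJ : 2 / Real.pi * (Real.pi * |z|) ≤ Real.sin (Real.pi * |z|) := by
    apply Real.mul_le_sin (by positivity)
    nlinarith [Real.pi_pos]
  have hpi : Real.pi ≠ 0 := Real.pi_ne_zero
  rw [distNearestInt, ← hz, habs, hsz]
  calc 2 * |z| = 2 / Real.pi * (Real.pi * |z|) := by field_simp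
    _ ≤ _ := hJ

theorem stmt9 (p : ℕ) (hp : p.Prime) (β : ℕ) (hβ : 1 ≤ β) (q : ℕ) (hq : q = p ^ β)
    (hq4 : q % 4 = 1) (a b l r : ℤ)
    (hl : Int.gcd l q = 1) (hlr : l ≡ r [ZMOD (q : ℤ)]) (hr0 : 0 ≤ r) (hr1 : r ≤ (q : ℤ) - 1)
    (hab : ¬ ((p : ℤ) ∣ 2 * a * b)) (hsq : l ^ 2 ≡ a * b [ZMOD (q : ℤ)]) :
    4 * Real.sqrt q * distNearestInt (1 / 2 - 4 * (r : ℝ) / q) ≤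
        2 * Real.sqrt q * |Real.cos (4 * Real.pi * (r : ℝ) / q)| ∧
    distNearestInt (((q : ℝ) - 8 * (r : ℝ)) / (2 * q)) ≠ 0 ∧
    1 / (q : ℝ) ≤ |Real.cos (4 * Real.pi * (r : ℝ) / q)| := by
  have hq0 : 0 < q := by omega
  have hqR : (0 : ℝ) < (q : ℝ) := by exact_mod_cast hq0
  set x : ℝ := ((q : ℝ) - 8 * (r : ℝ)) / (2 * q) with hxdef
  have hx : 1 / 2 - 4 * (r : ℝ) / q = x := by
    rw [hxdef]; field_simp; ring
  have hcos : Real.cos (4 * Real.pi * (r : ℝ) / q) = Real.sin (Real.pi * x) := by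
    rw [show 4 * Real.pi * (r : ℝ) / q = Real.pi / 2 - Real.pi * x by
      rw [hxdef]; field_simp; ring, Real.cos_pi_div_two_sub]
  have key := two_distNearestInt_le_abs_sin x
  -- p is odd
  have hp2 : p ≠ 2 := by
    rintro rfl
    have : q % 2 = 0 := by
      rw [hq, Nat.pow_mod]
      simp [Nat.one_le_iff_ne_zero.mp hβ]
    omega
  have hpq : (p : ℤ) ∣ (q : ℤ) := by
    rw [hq]; push_cast; exact dvd_pow_self _ (by omega)
  have hpZ : Prime (p : ℤ) := Int.prime_iff_natAbs_prime.mpr (by simpa using hp)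
  -- nonvanishing
  have hnum : ∀ t : ℤ, (q : ℤ) - 8 * r - 2 * q * t ≠ 0 := by
    intro t ht
    have h8 : 8 * r = (q : ℤ) * (1 - 2 * t) := by linarith
    have h64 : (q : ℤ) ∣ 64 * r ^ 2 := ⟨(q : ℤ) * (1 - 2 * t) ^ 2, by nlinarith⟩
    have hmod : 64 * l ^ 2 ≡ 64 * r ^ 2 [ZMOD (q : ℤ)] := (hlr.pow 2).mul_left 64
    have h64l : (q : ℤ) ∣ 64 * l ^ 2 :=
      Int.modEq_zero_iff_dvd.mp (hmod.trans (Int.modEq_zero_iff_dvd.mpr h64))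
    have hpl : (p : ℤ) ∣ 64 * l ^ 2 := hpq.trans h64l
    rcases hpZ.dvd_mul.mp hpl with h | h
    · have : (p : ℤ) ∣ 2 ^ 6 := by norm_num at h ⊢; exact_mod_cast h
      have := hpZ.dvd_of_dvd_pow this
      have : p ∣ 2 := by exact_mod_cast this
      exact hp2 ((Nat.prime_dvd_prime_iff_eq hp Nat.prime_two).mp this)
    · have hpl' : (p : ℤ) ∣ l := hpZ.dvd_of_dvd_pow h
      have hco : IsCoprime l (q : ℤ) := Int.isCoprime_iff_gcd_eq_one.mpr hl
      exact hpZ.not_isUnit (hco.isUnit_of_dvd' hpl' hpq)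
  have hne : distNearestInt x ≠ 0 := by
    intro h
    rw [distNearestInt, abs_eq_zero, sub_eq_zero] at h
    have : (q : ℝ) - 8 * r = 2 * q * (round x : ℝ) := by
      have e : (q : ℝ) - 8 * r = 2 * q * x := by rw [hxdef]; field_simp
      rw [e, ← h]
    have hz : (q : ℤ) - 8 * r - 2 * q * round x = 0 := by
      have : ((q : ℤ) - 8 * r - 2 * q * round x : ℝ) = 0 := by push_cast; linarith
      exact_mod_cast this
    exact hnum (round x) hz
  -- lower bound on distNearestInt x
  have hlow : 1 / (2 * (q : ℝ)) ≤ distNearestInt x := by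
    have hxr : x - (round x : ℝ) =
        (((q : ℤ) - 8 * r - 2 * q * round x : ℤ) : ℝ) / (2 * q) := by
      rw [hxdef]; push_cast; field_simp
    have h1 : (1 : ℝ) ≤ |(((q : ℤ) - 8 * r - 2 * q * round x : ℤ) : ℝ)| := by
      have := Int.one_le_abs (Int.natAbs_pos.mp (Int.natAbs_pos.mpr (hnum (round x))))
      exact_mod_cast this
    rw [distNearestInt, hxr, abs_div, abs_of_pos (by positivity : (0:ℝ) < 2 * q)]
    rw [div_le_div_iff₀ (by positivity) (by positivity)]
    nlinarith [h1, hqR]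
  refine ⟨?_, hne, ?_⟩
  · rw [hx, hcos]
    nlinarith [Real.sqrt_nonneg (q : ℝ), key]
  · rw [hcos]
    calc 1 / (q : ℝ) = 2 * (1 / (2 * q)) := by ring
      _ ≤ 2 * distNearestInt x := by linarith
      _ ≤ _ := key
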